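/- Let H be a family of functions mapping X to [0,1] and let ℓ: X → [0,1] be a fixed function (the loss of a fixed predictor). Then for any sample S of size m, the empirical Rademacher complexity of the product class {x ↦ h(x) * ℓ(x) : h ∈ H} is at most R̂_S(H) + R̂_S({ℓ}), where R̂_S({ℓ}) is the empirical Rademacher complexity of the singleton class {ℓ}. -/
import Mathlib


open Set

/-- Empirical Rademacher complexity of a class `G` of real-valued functions
over a sample `S` of size `m`. -/
noncomputable def empRad {X : Type*} {m : ℕ} (G : Set (X → ℝ)) (S : Fin m → X) : ℝ :=
  (∑ σ : Fin m → Bool,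
      sSup ((fun g : X → ℝ => (∑ i : Fin m, (if σ i then (1:ℝ) else -1) * g (S i)) / m) '' G))
    / 2 ^ m

lemma empRad_singleton_eq_zero {X : Type*} {m : ℕ} (f : X → ℝ) (S : Fin m → X) :
    empRad ({f} : Set (X → ℝ)) S = 0 := by
  have hinv : Function.Involutive (fun σ : Fin m → Bool => fun i => !σ i) := by
    intro σ; funext i; simp
  unfold empRad
  rw [div_eq_zero_iff]
  left
  simp only [image_singleton, csSup_singleton]
  set v : (Fin m → Bool) → ℝ :=
    fun σ => (∑ i : Fin m, (if σ i then (1:ℝ) else -1) * f (S i)) / m with hv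
  have h1 : ∀ σ, v (fun i => !σ i) = - v σ := by
    intro σ
    simp only [hv, ← neg_div]
    congr 1
    rw [← Finset.sum_neg_distrib]
    refine Finset.sum_congr rfl fun i _ => ?_
    by_cases hb : σ i <;> simp [hb]
  have h2 : ∑ σ : Fin m → Bool, v (fun i => !σ i) = ∑ σ : Fin m → Bool, v σ :=
    Fintype.sum_bijective _ hinv.bijective _ _ (fun σ => rfl)
  have h3 : ∑ σ : Fin m → Bool, v (fun i => !σ i) = - ∑ σ : Fin m → Bool, v σ := by
    rw [← Finset.sum_neg_distrib]
    exact Finset.sum_congr rfl fun σ _ => h1 σ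
  linarith [h2, h3]

lemma aux_bdd {X : Type*} {m : ℕ} (S : Fin m → X) (H : Set (X → ℝ))
    (hH : ∀ h ∈ H, ∀ x, h x ∈ Icc (0:ℝ) 1) (a : Fin m → ℝ) (ha : ∀ i, |a i| ≤ 1) :
    BddAbove ((fun h : X → ℝ => (∑ i : Fin m, a i * h (S i)) / m) '' H) := by
  refine ⟨m, ?_⟩
  rintro _ ⟨h, hh, rfl⟩
  have hb : (∑ i : Fin m, a i * h (S i)) ≤ m := by
    calc ∑ i : Fin m, a i * h (S i) ≤ ∑ _i : Fin m, (1:ℝ) := by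
          refine Finset.sum_le_sum fun i _ => ?_
          have h1 := (hH h hh (S i)).1
          have h2 := (hH h hh (S i)).2
          calc a i * h (S i) ≤ |a i * h (S i)| := le_abs_self _
            _ = |a i| * |h (S i)| := abs_mul _ _
            _ ≤ 1 * 1 := by
                refine mul_le_mul (ha i) ?_ (abs_nonneg _) zero_le_one
                rw [abs_of_nonneg h1]; exact h2
            _ = 1 := one_mul 1
      _ = m := by simp
  rcases Nat.eq_zero_or_pos m with hm | hm
  · subst hm; simp
  · have hm' : (0:ℝ) < m := by exact_mod_cast hm
    calc (∑ i : Fin m, a i * h (S i)) / (m:ℝ) ≤ (m:ℝ) / m := by gcongr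
      _ = 1 := div_self hm'.ne'
      _ ≤ m := by exact_mod_cast hm

lemma key_sup {X : Type*} (H : Set (X → ℝ)) (hne : H.Nonempty)
    (A B : (X → ℝ) → ℝ) (c : ℝ) (hc : |c| ≤ 1)
    (b1 : BddAbove ((fun h => A h + B h) '' H))
    (b2 : BddAbove ((fun h => A h - B h) '' H)) :
    sSup ((fun h => A h + c * B h) '' H) + sSup ((fun h => A h - c * B h) '' H)
      ≤ sSup ((fun h => A h + B h) '' H) + sSup ((fun h => A h - B h) '' H) := by
  have pair : ∀ h ∈ H, ∀ h' ∈ H,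
      (A h + c * B h) + (A h' - c * B h')
        ≤ sSup ((fun h => A h + B h) '' H) + sSup ((fun h => A h - B h) '' H) := by
    intro h hh h' hh'
    have habs : c * (B h - B h') ≤ |B h - B h'| := by
      calc c * (B h - B h') ≤ |c * (B h - B h')| := le_abs_self _
        _ = |c| * |B h - B h'| := abs_mul _ _
        _ ≤ 1 * |B h - B h'| := mul_le_mul_of_nonneg_right hc (abs_nonneg _)
        _ = _ := one_mul _
    rcases le_total (B h') (B h) with hbb | hbb
    · have e1 : A h + B h ≤ sSup ((fun h => A h + B h) '' H) := le_csSup b1 ⟨h, hh, rfl⟩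
      have e2 : A h' - B h' ≤ sSup ((fun h => A h - B h) '' H) := le_csSup b2 ⟨h', hh', rfl⟩
      have habs2 : |B h - B h'| = B h - B h' := abs_of_nonneg (by linarith)
      linarith
    · have e1 : A h' + B h' ≤ sSup ((fun h => A h + B h) '' H) := le_csSup b1 ⟨h', hh', rfl⟩
      have e2 : A h - B h ≤ sSup ((fun h => A h - B h) '' H) := le_csSup b2 ⟨h, hh, rfl⟩
      have habs2 : |B h - B h'| = -(B h - B h') := abs_of_nonpos (by linarith)
      linarith
  have h1 : sSup ((fun h => A h + c * B h) '' H)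
      ≤ (sSup ((fun h => A h + B h) '' H) + sSup ((fun h => A h - B h) '' H))
        - sSup ((fun h => A h - c * B h) '' H) := by
    refine csSup_le (hne.image _) ?_
    rintro _ ⟨h, hh, rfl⟩
    dsimp only
    rw [le_sub_iff_add_le, add_comm, ← le_sub_iff_add_le]
    refine csSup_le (hne.image _) ?_
    rintro _ ⟨h', hh', rfl⟩
    dsimp only
    have := pair h hh h' hh'
    linarith
  linarith

lemma contraction {X : Type*} {m : ℕ} (S : Fin m → X) (H : Set (X → ℝ)) (ℓ : X → ℝ)
    (hH : ∀ h ∈ H, ∀ x, h x ∈ Icc (0:ℝ) 1) (hℓ : ∀ x, ℓ x ∈ Icc (0:ℝ) 1)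
    (hne : H.Nonempty) (T : Finset (Fin m)) :
    (∑ σ : Fin m → Bool, sSup ((fun h : X → ℝ =>
        (∑ i : Fin m, ((if σ i then (1:ℝ) else -1) * (if i ∈ T then ℓ (S i) else 1)) * h (S i))
          / m) '' H))
    ≤ ∑ σ : Fin m → Bool, sSup ((fun h : X → ℝ =>
        (∑ i : Fin m, (if σ i then (1:ℝ) else -1) * h (S i)) / m) '' H) := by
  induction T using Finset.induction_on with
  | empty => simp
  | @insert j T hj IH =>
    refine le_trans ?_ IH
    -- coefficient function
    set a : (Fin m → Bool) → Finset (Fin m) → Fin m → ℝ :=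
      fun σ U i => (if σ i then (1:ℝ) else -1) * (if i ∈ U then ℓ (S i) else 1) with ha
    have habs : ∀ σ U i, |a σ U i| ≤ 1 := by
      intro σ U i
      rw [ha]
      simp only [abs_mul]
      have h1 : |if σ i then (1:ℝ) else -1| = 1 := by cases σ i <;> simp
      have h2 : |if i ∈ U then ℓ (S i) else 1| ≤ 1 := by
        by_cases hi : i ∈ U
        · simp only [hi, if_true]
          rw [abs_of_nonneg (hℓ (S i)).1]; exact (hℓ (S i)).2
        · simp [hi]
      rw [h1, one_mul]; exact h2
    set flip : (Fin m → Bool) → (Fin m → Bool) :=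
      fun σ => Function.update σ j (!σ j) with hflipdef
    have hinv : Function.Involutive flip := by
      intro σ; funext i
      by_cases hi : i = j
      · subst hi; simp [hflipdef, Function.update_self]
      · simp [hflipdef, Function.update_of_ne hi]
    set F : (Fin m → Bool) → ℝ := fun σ =>
      sSup ((fun h : X → ℝ => (∑ i : Fin m, a σ T i * h (S i)) / m) '' H) with hF
    set F' : (Fin m → Bool) → ℝ := fun σ =>
      sSup ((fun h : X → ℝ => (∑ i : Fin m, a σ (insert j T) i * h (S i)) / m) '' H) with hF'
    have keyσ : ∀ σ, F' σ + F' (flip σ) ≤ F σ + F (flip σ) := by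
      intro σ
      set c := ℓ (S j) with hcdef
      set A : (X → ℝ) → ℝ := fun h =>
        (∑ i ∈ Finset.univ.erase j, a σ T i * h (S i)) / m with hA
      set B : (X → ℝ) → ℝ := fun h => (if σ j then (1:ℝ) else -1) * h (S j) / m with hB
      have hflipj : flip σ j = !σ j := by simp [hflipdef, Function.update_self]
      have hflipne : ∀ i, i ≠ j → flip σ i = σ i := by
        intro i hi; simp [hflipdef, Function.update_of_ne hi]
      have hsgflip : (if flip σ j then (1:ℝ) else -1) = -(if σ j then (1:ℝ) else -1) := by
        rw [hflipj]; cases σ j <;> simp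
    -- erase-sum congruences
      have herase : ∀ (τ : Fin m → Bool) (U : Finset (Fin m)), (∀ i, i ≠ j → τ i = σ i) →
          (∀ i, i ≠ j → (i ∈ U) = (i ∈ T)) → ∀ h : X → ℝ,
          ∑ i ∈ Finset.univ.erase j, a τ U i * h (S i)
            = ∑ i ∈ Finset.univ.erase j, a σ T i * h (S i) := by
        intro τ U hτ hU h
        refine Finset.sum_congr rfl fun i hi => ?_
        have hij : i ≠ j := (Finset.mem_erase.mp hi).1
        rw [ha]
        simp only [hτ i hij, hU i hij]
      have hsplit : ∀ (τ : Fin m → Bool) (U : Finset (Fin m)) (h : X → ℝ),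
          (∑ i : Fin m, a τ U i * h (S i))
            = (∑ i ∈ Finset.univ.erase j, a τ U i * h (S i)) + a τ U j * h (S j) := by
        intro τ U h
        rw [Finset.sum_erase_add _ _ (Finset.mem_univ j)]
      have f1 : (fun h : X → ℝ => (∑ i : Fin m, a σ (insert j T) i * h (S i)) / m)
          = fun h => A h + c * B h := by
        funext h
        rw [hsplit, herase σ (insert j T) (fun i _ => rfl)
          (fun i hi => by simp [Finset.mem_insert, hi]), add_div, hA, hB]
        have : a σ (insert j T) j = (if σ j then (1:ℝ) else -1) * c := by
          simp only [ha, Finset.mem_insert_self, if_true, hcdef]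
        rw [this]; try ring
      have f2 : (fun h : X → ℝ => (∑ i : Fin m, a (flip σ) (insert j T) i * h (S i)) / m)
          = fun h => A h - c * B h := by
        funext h
        rw [hsplit, herase (flip σ) (insert j T) hflipne
          (fun i hi => by simp [Finset.mem_insert, hi]), add_div, hA, hB]
        have : a (flip σ) (insert j T) j = -((if σ j then (1:ℝ) else -1) * c) := by
          simp only [ha, hflipj, Finset.mem_insert_self, if_true]
          cases σ j <;> simp [hcdef]
        rw [this]; try ring
      have f3 : (fun h : X → ℝ => (∑ i : Fin m, a σ T i * h (S i)) / m)
          = fun h => A h + B h := by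
        funext h
        rw [hsplit, add_div, hA, hB]
        have : a σ T j = (if σ j then (1:ℝ) else -1) := by
          simp only [ha, hj, if_false, mul_one]
        rw [this]; try ring
      have f4 : (fun h : X → ℝ => (∑ i : Fin m, a (flip σ) T i * h (S i)) / m)
          = fun h => A h - B h := by
        funext h
        rw [hsplit, herase (flip σ) T hflipne (fun _ _ => rfl), add_div, hA, hB]
        have : a (flip σ) T j = -(if σ j then (1:ℝ) else -1) := by
          simp only [ha, hflipj]
          cases σ j <;> simp [hj]
        rw [this]; try ring
      have b1 : BddAbove ((fun h => A h + B h) '' H) := by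
        rw [← f3]; exact aux_bdd S H hH _ (habs σ T)
      have b2 : BddAbove ((fun h => A h - B h) '' H) := by
        rw [← f4]; exact aux_bdd S H hH _ (habs (flip σ) T)
      have hc1 : |c| ≤ 1 := by
        rw [hcdef, abs_of_nonneg (hℓ (S j)).1]; exact (hℓ (S j)).2
      have := key_sup H hne A B c hc1 b1 b2
      rw [hF', hF]
      simp only
      rw [f1, f2, f3, f4]
      exact this
    -- sum over σ using the involution
    have hcomp : ∀ G : (Fin m → Bool) → ℝ,
        ∑ σ : Fin m → Bool, G (flip σ) = ∑ σ : Fin m → Bool, G σ := by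
      intro G
      exact Fintype.sum_bijective _ hinv.bijective _ _ (fun σ => rfl)
    have hsum : ∑ σ : Fin m → Bool, (F' σ + F' (flip σ))
        ≤ ∑ σ : Fin m → Bool, (F σ + F (flip σ)) :=
      Finset.sum_le_sum fun σ _ => keyσ σ
    rw [Finset.sum_add_distrib, Finset.sum_add_distrib, hcomp F', hcomp F] at hsum
    show ∑ σ : Fin m → Bool, F' σ ≤ ∑ σ : Fin m → Bool, F σ
    linarith

/-- Product with a fixed `[0,1]`-valued function `ℓ`: the empirical Rademacher
complexity of `{x ↦ h x * ℓ x : h ∈ H}` is at most `R̂_S(H) + R̂_S({ℓ})`. -/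
theorem empRad_product_singleton_le {X : Type*} {m : ℕ} (S : Fin m → X)
    (H : Set (X → ℝ)) (ℓ : X → ℝ)
    (hH : ∀ h ∈ H, ∀ x, h x ∈ Icc (0:ℝ) 1)
    (hℓ : ∀ x, ℓ x ∈ Icc (0:ℝ) 1) :
    empRad {g | ∃ h ∈ H, g = fun x => h x * ℓ x} S ≤
      empRad H S + empRad ({ℓ} : Set (X → ℝ)) S := by
  rcases H.eq_empty_or_nonempty with rfl | hne
  · have hG : {g : X → ℝ | ∃ h ∈ (∅ : Set (X → ℝ)), g = fun x => h x * ℓ x} = ∅ := by simp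
    rw [hG, empRad_singleton_eq_zero]
    simp [empRad, Real.sSup_empty]
  · rw [empRad_singleton_eq_zero, add_zero]
    unfold empRad
    have hpow : (0:ℝ) < 2 ^ m := by positivity
    rw [div_le_div_iff_of_pos_right hpow]
    calc ∑ σ : Fin m → Bool,
          sSup ((fun g : X → ℝ => (∑ i : Fin m, (if σ i then (1:ℝ) else -1) * g (S i)) / m) ''
            {g | ∃ h ∈ H, g = fun x => h x * ℓ x})
        = ∑ σ : Fin m → Bool, sSup ((fun h : X → ℝ =>
            (∑ i : Fin m, ((if σ i then (1:ℝ) else -1) *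
              (if i ∈ (Finset.univ : Finset (Fin m)) then ℓ (S i) else 1)) * h (S i)) / m) '' H) := by
          refine Finset.sum_congr rfl fun σ _ => ?_
          congr 1
          ext r
          simp only [mem_image, mem_setOf_eq]
          constructor
          · rintro ⟨g, ⟨h, hh, rfl⟩, rfl⟩
            refine ⟨h, hh, ?_⟩
            congr 1
            refine Finset.sum_congr rfl fun i _ => ?_
            simp only [Finset.mem_univ, if_true]
            ring
          · rintro ⟨h, hh, rfl⟩
            refine ⟨fun x => h x * ℓ x, ⟨h, hh, rfl⟩, ?_⟩
            congr 1
            refine Finset.sum_congr rfl fun i _ => ?_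
            simp only [Finset.mem_univ, if_true]
            ring
      _ ≤ _ := contraction S H ℓ hH hℓ hne Finset.univ
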